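/- For natural numbers a, b ≥ 0, the antiderivative g(x) = ∫_0^x t^a (1−t)^b dt can be written as g(x) = (1−x)^{b+1}·p(x) + a!/∏_{k=0}^{a}(b+k+1), where p is a polynomial of degree at most a. -/

import Mathlib

open Polynomial

lemma antideriv_aux (a : ℕ) : ∀ b : ℕ, ∃ p : Polynomial ℝ, p.natDegree ≤ a ∧
    (∀ x : ℝ, HasDerivAt (fun y : ℝ => (1 - y) ^ (b + 1) * p.eval y)
      (x ^ a * (1 - x) ^ b) x) ∧
    p.eval 0 = -((a.factorial : ℝ) / ∏ k ∈ Finset.range (a + 1), ((b : ℝ) + k + 1)) := by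
  induction a with
  | zero =>
    intro b
    refine ⟨Polynomial.C (-(1 / ((b : ℝ) + 1))), by simp, ?_, by simp⟩
    intro x
    have h1 : HasDerivAt (fun y : ℝ => (1 - y) ^ (b + 1))
        ((↑(b + 1) : ℝ) * (1 - x) ^ (b + 1 - 1) * (-1)) x := by
      exact ((hasDerivAt_id x).const_sub 1).pow (b + 1)
    have h2 := h1.mul_const (-(1 / ((b : ℝ) + 1)))
    have hb : ((b : ℝ) + 1) ≠ 0 := by positivity
    convert h2 using 1
    all_goals try simp only [Polynomial.eval_C]
    all_goals push_cast
    · rfl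
    · rfl
    · field_simp
  | succ a IH =>
    intro b
    obtain ⟨q, hqdeg, hqderiv, hqeval⟩ := IH (b + 1)
    refine ⟨Polynomial.C (-(1 / ((b : ℝ) + 1))) * Polynomial.X ^ (a + 1)
      + Polynomial.C (((a : ℝ) + 1) / ((b : ℝ) + 1)) * (1 - Polynomial.X) * q, ?_, ?_, ?_⟩
    · refine le_trans (natDegree_add_le _ _) (max_le ?_ ?_)
      · exact le_trans (natDegree_C_mul_le _ _) (by simp)
      · refine le_trans (natDegree_mul_le) ?_
        have h1 : (Polynomial.C (((a : ℝ) + 1) / ((b : ℝ) + 1)) * (1 - Polynomial.X)).natDegree ≤ 1 := by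
          refine le_trans (natDegree_mul_le) ?_
          simp only [natDegree_C, zero_add]
          exact le_trans (natDegree_sub_le _ _) (by simp)
        omega
    · intro x
      have hb : ((b : ℝ) + 1) ≠ 0 := by positivity
      have heq : (fun y : ℝ => (1 - y) ^ (b + 1) * Polynomial.eval y
          (Polynomial.C (-(1 / ((b : ℝ) + 1))) * Polynomial.X ^ (a + 1)
            + Polynomial.C (((a : ℝ) + 1) / ((b : ℝ) + 1)) * (1 - Polynomial.X) * q))
          = fun y : ℝ => (-(1 / ((b : ℝ) + 1))) * (y ^ (a + 1) * (1 - y) ^ (b + 1))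
            + (((a : ℝ) + 1) / ((b : ℝ) + 1)) * ((1 - y) ^ (b + 1 + 1) * q.eval y) := by
        funext y
        simp only [Polynomial.eval_add, Polynomial.eval_mul, Polynomial.eval_C,
          Polynomial.eval_pow, Polynomial.eval_X, Polynomial.eval_sub, Polynomial.eval_one]
        ring
      rw [heq]
      have h1 : HasDerivAt (fun y : ℝ => y ^ (a + 1) * (1 - y) ^ (b + 1))
          ((↑(a + 1) : ℝ) * x ^ (a + 1 - 1) * 1 * (1 - x) ^ (b + 1)
            + x ^ (a + 1) * ((↑(b + 1) : ℝ) * (1 - x) ^ (b + 1 - 1) * (-1))) x := by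
        exact ((hasDerivAt_id x).pow (a + 1)).mul (((hasDerivAt_id x).const_sub 1).pow (b + 1))
      have h2 := hqderiv x
      have h3 := (h1.const_mul (-(1 / ((b : ℝ) + 1)))).add
        (h2.const_mul (((a : ℝ) + 1) / ((b : ℝ) + 1)))
      refine h3.congr_deriv ?_
      push_cast
      field_simp
      ring
    · have hprodpos : (0 : ℝ) < ∏ k ∈ Finset.range (a + 1), ((b : ℝ) + 1 + k + 1) := by
        apply Finset.prod_pos; intro i _; positivity
      have hprodpos' : (0 : ℝ) < ∏ k ∈ Finset.range (a + 1 + 1), ((b : ℝ) + k + 1) := by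
        apply Finset.prod_pos; intro i _; positivity
      have hsplit : ∏ k ∈ Finset.range (a + 1 + 1), ((b : ℝ) + k + 1)
          = (∏ k ∈ Finset.range (a + 1), ((b : ℝ) + 1 + k + 1)) * ((b : ℝ) + 1) := by
        rw [Finset.prod_range_succ' (fun k => ((b : ℝ) + k + 1)) (a + 1)]
        congr 1
        · exact Finset.prod_congr rfl fun k _ => by push_cast; ring
        · norm_num
      simp only [Polynomial.eval_add, Polynomial.eval_mul, Polynomial.eval_C,
        Polynomial.eval_pow, Polynomial.eval_X, Polynomial.eval_sub, Polynomial.eval_one,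
        zero_pow (Nat.succ_ne_zero a), mul_zero, sub_zero, mul_one, zero_add]
      rw [hqeval, hsplit]
      have hb : ((b : ℝ) + 1) ≠ 0 := by positivity
      rw [Nat.factorial_succ]
      push_cast
      field_simp

/-- the antiderivative `∫_0^x t^a (1−t)^b dt` equals
`(1−x)^{b+1} p(x) + a!/∏_{k=0}^{a}(b+k+1)` for some polynomial `p` of degree ≤ a. -/
theorem antiderivative_closed_form (a b : ℕ) :
    ∃ p : Polynomial ℝ, p.natDegree ≤ a ∧
      ∀ x : ℝ, (∫ t in (0:ℝ)..x, t ^ a * (1 - t) ^ b) =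
        (1 - x) ^ (b + 1) * p.eval x +
          (a.factorial : ℝ) / ∏ k ∈ Finset.range (a + 1), ((b : ℝ) + k + 1) := by
  obtain ⟨p, hdeg, hderiv, heval⟩ := antideriv_aux a b
  refine ⟨p, hdeg, fun x => ?_⟩
  have hcont : Continuous fun t : ℝ => t ^ a * (1 - t) ^ b := by fun_prop
  have := intervalIntegral.integral_eq_sub_of_hasDerivAt
    (f := fun y : ℝ => (1 - y) ^ (b + 1) * p.eval y)
    (fun t _ => hderiv t) (hcont.intervalIntegrable 0 x)
  rw [this]
  simp only [sub_zero, one_pow, one_mul]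
  rw [heval]
  ring
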